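/- arXiv:1211.3508 — 7 statements merged into one kernel-verified Lean document; each statement's English description precedes it below -/
import Mathlib

section
/- Let p be a prime, n a positive integer with p ∣ n, and f ∈ ℤ[x₁,…,x_k]. Then f(x₁^p,…,x_k^p)^(n/p) ≡ f(x₁,…,x_k)^n modulo p^(ord_p n), where ord_p n is the exponent of p in n. -/
theorem stmt_1 (p : ℕ) (hp : p.Prime) (n : ℕ) (hn : 0 < n) (hpn : p ∣ n)
    (k : ℕ) (f : MvPolynomial (Fin k) ℤ) :
    ((p : MvPolynomial (Fin k) ℤ)) ^ (n.factorization p) ∣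
      (MvPolynomial.aeval (fun i => MvPolynomial.X i ^ p) f) ^ (n / p) - f ^ n := by
  haveI : Fact p.Prime := ⟨hp⟩
  set e := n.factorization p with he
  have he1 : 1 ≤ e := (Nat.Prime.factorization_pos_of_dvd hp hn.ne' hpn)
  -- the expand polynomial
  have hexp : MvPolynomial.aeval (fun i => MvPolynomial.X i ^ p) f
      = MvPolynomial.expand p f := rfl
  -- basic Frobenius congruence
  have hbase : (p : MvPolynomial (Fin k) ℤ) ∣ MvPolynomial.expand p f - f ^ p := by
    rw [← MvPolynomial.C_eq_coe_nat, MvPolynomial.C_dvd_iff_zmod, map_sub, sub_eq_zero,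
      MvPolynomial.map_expand, map_pow, MvPolynomial.expand_zmod]
  -- p^(e-1) divides n/p
  obtain ⟨m, hm⟩ : p ^ (e - 1) ∣ n / p := by
    have h1 : p ^ e ∣ n := Nat.ordProj_dvd n p
    obtain ⟨c, hc⟩ := hpn
    have : p ^ e ∣ p * c := hc ▸ h1
    rw [hc, Nat.mul_div_cancel_left _ hp.pos]
    rcases this with ⟨d, hd⟩
    refine ⟨d, ?_⟩
    have hpe : p ^ e = p * p ^ (e - 1) := by
      conv_lhs => rw [← Nat.succ_pred_eq_of_pos he1]
      rw [pow_succ']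
      rfl
    have := hd
    rw [hpe, mul_assoc] at this
    exact Nat.eq_of_mul_eq_mul_left hp.pos this
  -- rewrite f^n
  have hfn : f ^ n = (f ^ p) ^ (n / p) := by
    rw [← pow_mul, Nat.mul_div_cancel' hpn]
  rw [hexp, hfn, hm, pow_mul, pow_mul]
  have hkey : (p : MvPolynomial (Fin k) ℤ) ^ e ∣
      (MvPolynomial.expand p f) ^ p ^ (e - 1) - (f ^ p) ^ p ^ (e - 1) := by
    have := dvd_sub_pow_of_dvd_sub hbase (e - 1)
    rwa [Nat.sub_add_cancel he1] at this
  exact hkey.trans (sub_dvd_pow_sub_pow _ _ m)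
end

section
/- Let p be a prime, n a positive integer with p ∣ n, m an integer, and d a divisor of n with d ∣ (n/p). Then d·(1 − m^(n/d)) ≡ d·(1 − m^(n/(p·d))) modulo p^(ord_p n). -/
theorem stmt_2 (p : ℕ) (hp : p.Prime) (n : ℕ) (hn : 0 < n) (hpn : p ∣ n)
    (m : ℤ) (d : ℕ) (hd : d ∣ n) (hd' : d ∣ n / p) :
    (d : ℤ) * (1 - m ^ (n / d)) ≡ (d : ℤ) * (1 - m ^ (n / (p * d)))
      [ZMOD (p : ℤ) ^ (n.factorization p)] := by
  have hp0 : 0 < p := hp.pos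
  have hd0 : 0 < d := Nat.pos_of_dvd_of_pos hd hn
  obtain ⟨c, hc⟩ := hd'
  have hnpd : n = p * d * c := by
    rw [mul_assoc, ← hc, Nat.mul_div_cancel' hpn]
  have hc0 : 0 < c := by
    rcases Nat.eq_zero_or_pos c with h | h
    · simp [h, hnpd] at hn
    · exact h
  have hnd : n / d = p * c := by
    rw [hnpd]; rw [show p * d * c = d * (p * c) by ring, Nat.mul_div_cancel_left _ hd0]
  have hnpd' : n / (p * d) = c := by
    rw [hnpd, Nat.mul_div_cancel_left _ (Nat.mul_pos hp0 hd0)]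
  set t := c.factorization p with ht
  -- factorization relation
  have hv : n.factorization p = d.factorization p + (t + 1) := by
    rw [hnpd, Nat.factorization_mul (Nat.mul_pos hp0 hd0).ne' hc0.ne',
      Nat.factorization_mul hp0.ne' hd0.ne']
    simp [Finsupp.add_apply, hp.factorization_self]; ring
  -- write c = p^t * s
  obtain ⟨s, hs⟩ := Nat.ordProj_dvd c p
  -- key divisibility
  have fermat : (p : ℤ) ∣ (m ^ s) ^ p - m ^ s := by
    haveI := Fact.mk hp
    have : ((((m ^ s) ^ p - m ^ s : ℤ)) : ZMod p) = 0 := by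
      push_cast
      rw [ZMod.pow_card]
      ring
    exact (ZMod.intCast_zmod_eq_zero_iff_dvd _ p).mp this
  have key : ((p : ℤ)) ^ (t + 1) ∣ m ^ (n / d) - m ^ (n / (p * d)) := by
    have h := dvd_sub_pow_of_dvd_sub fermat t
    have e1 : ((m ^ s) ^ p) ^ p ^ t = m ^ (n / d) := by
      rw [hnd, hs, ← pow_mul, ← pow_mul]; ring_nf; rw [← ht]
    have e2 : (m ^ s) ^ p ^ t = m ^ (n / (p * d)) := by
      rw [hnpd', hs, ← pow_mul, mul_comm]
    rw [e1, e2] at h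
    exact_mod_cast h
  have keyd : ((p : ℤ)) ^ (d.factorization p) ∣ (d : ℤ) := by
    exact_mod_cast Int.natCast_dvd_natCast.mpr (Nat.ordProj_dvd d p)
  have : ((p : ℤ)) ^ (n.factorization p) ∣
      (d : ℤ) * (1 - m ^ (n / (p * d))) - (d : ℤ) * (1 - m ^ (n / d)) := by
    rw [hv, pow_add]
    have : (d : ℤ) * (1 - m ^ (n / (p * d))) - (d : ℤ) * (1 - m ^ (n / d)) =
        (d : ℤ) * (m ^ (n / d) - m ^ (n / (p * d))) := by ring
    rw [this]
    exact mul_dvd_mul keyd key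
  exact (Int.modEq_iff_dvd.mpr this)
end

section
/- Let R be a commutative ring equipped with operations Ψⁿ : R → R for n ≥ 1 that are ring homomorphisms satisfying Ψ¹ = id and Ψᵐ ∘ Ψⁿ = Ψ^{mn}. Then for all sequences (a_n), (b_n) in R and every n ≥ 1: (∑_{i ∣ n} i·Ψ^{n/i}(a_i)) · (∑_{j ∣ n} j·Ψ^{n/j}(b_j)) = ∑_{d ∣ n} d·Ψ^{n/d}(c_d), where c_d := ∑_{i,j : lcm(i,j) = d} gcd(i,j)·Ψ^{d/i}(a_i)·Ψ^{d/j}(b_j). -/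
set_option maxHeartbeats 1600000


theorem stmt_11 (R : Type*) [CommRing R] (Ψ : ℕ → R →+* R)
    (hΨ1 : Ψ 1 = RingHom.id R)
    (hΨ : ∀ m n : ℕ, 1 ≤ m → 1 ≤ n → (Ψ m).comp (Ψ n) = Ψ (m * n))
    (a b : ℕ → R) (n : ℕ) (hn : 1 ≤ n) :
    (∑ i ∈ n.divisors, (i : R) * Ψ (n / i) (a i)) *
        (∑ j ∈ n.divisors, (j : R) * Ψ (n / j) (b j))
      = ∑ d ∈ n.divisors, (d : R) * Ψ (n / d)
          (∑ q ∈ (d.divisors ×ˢ d.divisors).filter (fun q => Nat.lcm q.1 q.2 = d),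
            (Nat.gcd q.1 q.2 : R) * (Ψ (d / q.1) (a q.1) * Ψ (d / q.2) (b q.2))) := by
  have hcomp : ∀ i d : ℕ, i ∣ d → d ∣ n → 0 < i → ∀ x : R,
      Ψ (n / d) (Ψ (d / i) x) = Ψ (n / i) x := by
    intro i d hid hdn hi x
    have hd : 0 < d := Nat.pos_of_dvd_of_pos hdn hn
    have hn0 : 0 < n := hn
    have h1 : 1 ≤ n / d := Nat.one_le_div_iff hd |>.2 (Nat.le_of_dvd hn0 hdn)
    have h2 : 1 ≤ d / i := Nat.one_le_div_iff hi |>.2 (Nat.le_of_dvd hd hid)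
    have := hΨ (n / d) (d / i) h1 h2
    have heq : n / d * (d / i) = n / i := by
      obtain ⟨k, hk⟩ := hdn
      obtain ⟨m, hm⟩ := hid
      subst hk hm
      rw [Nat.mul_div_cancel_left _ hd, Nat.mul_div_cancel_left _ hi, mul_assoc,
        Nat.mul_div_cancel_left _ hi, mul_comm]
    calc Ψ (n / d) (Ψ (d / i) x) = ((Ψ (n / d)).comp (Ψ (d / i))) x := rfl
      _ = Ψ (n / i) x := by rw [this, heq]
  -- rewrite RHS terms
  have hRHS : ∀ d ∈ n.divisors,
      (d : R) * Ψ (n / d)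
          (∑ q ∈ (d.divisors ×ˢ d.divisors).filter (fun q => Nat.lcm q.1 q.2 = d),
            (Nat.gcd q.1 q.2 : R) * (Ψ (d / q.1) (a q.1) * Ψ (d / q.2) (b q.2)))
      = ∑ q ∈ (n.divisors ×ˢ n.divisors).filter (fun q => Nat.lcm q.1 q.2 = d),
          ((q.1 : R) * Ψ (n / q.1) (a q.1)) * ((q.2 : R) * Ψ (n / q.2) (b q.2)) := by
    intro d hd
    rw [Nat.mem_divisors] at hd
    obtain ⟨hdn, hn0⟩ := hd
    have hd0 : 0 < d := Nat.pos_of_dvd_of_pos hdn (Nat.pos_of_ne_zero hn0)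
    have hset : (d.divisors ×ˢ d.divisors).filter (fun q => Nat.lcm q.1 q.2 = d)
        = (n.divisors ×ˢ n.divisors).filter (fun q => Nat.lcm q.1 q.2 = d) := by
      ext q
      simp only [Finset.mem_filter, Finset.mem_product, Nat.mem_divisors]
      constructor
      · rintro ⟨⟨⟨h1, _⟩, ⟨h2, _⟩⟩, hl⟩
        exact ⟨⟨⟨h1.trans hdn, hn0⟩, ⟨h2.trans hdn, hn0⟩⟩, hl⟩
      · rintro ⟨⟨⟨h1, _⟩, ⟨h2, _⟩⟩, hl⟩
        exact ⟨⟨⟨hl ▸ Nat.dvd_lcm_left _ _, hd0.ne'⟩,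
          ⟨hl ▸ Nat.dvd_lcm_right _ _, hd0.ne'⟩⟩, hl⟩
    rw [hset, map_sum, Finset.mul_sum]
    refine Finset.sum_congr rfl ?_
    rintro ⟨i, j⟩ hq
    simp only [Finset.mem_filter, Finset.mem_product, Nat.mem_divisors] at hq
    obtain ⟨⟨⟨hin, _⟩, ⟨hjn, _⟩⟩, hl⟩ := hq
    have hi0 : 0 < i := Nat.pos_of_dvd_of_pos hin (Nat.pos_of_ne_zero hn0)
    have hj0 : 0 < j := Nat.pos_of_dvd_of_pos hjn (Nat.pos_of_ne_zero hn0)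
    have hid : i ∣ d := hl ▸ Nat.dvd_lcm_left i j
    have hjd : j ∣ d := hl ▸ Nat.dvd_lcm_right i j
    rw [map_mul, map_mul, map_natCast, hcomp i d hid hdn hi0, hcomp j d hjd hdn hj0]
    have hgl : (Nat.gcd i j : R) * (d : R) = (i : R) * (j : R) := by
      rw [← Nat.cast_mul, ← Nat.cast_mul, ← hl, Nat.gcd_mul_lcm]
    linear_combination (Ψ (n / i) (a i) * Ψ (n / j) (b j)) * hgl
  rw [Finset.sum_congr rfl hRHS, Finset.sum_mul_sum, ← Finset.sum_product']
  refine (Finset.sum_fiberwise_of_maps_to (g := fun q : ℕ × ℕ => Nat.lcm q.1 q.2) ?_ _).symm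
  rintro ⟨i, j⟩ hq
  simp only [Finset.mem_product, Nat.mem_divisors] at hq ⊢
  exact ⟨Nat.lcm_dvd hq.1.1 hq.2.1, hq.1.2⟩
end

section
/- Let m ≠ 1 be an integer and define E_n ∈ ℚ (n ≥ 1) by the recursion ∑_{d ∣ n} d·(1 − m^(n/d))·E_d^(n/d) = 1 for all n ≥ 1 (note the powers E_d^(n/d)). Then (1 − m)^n · E_n ∈ ℤ for every n ≥ 1. -/
open PowerSeries Finset

noncomputable section Aux13
namespace Aux13

/-- The operator `X·d/dX` on power series over `ℚ`. -/
def D (f : PowerSeries ℚ) : PowerSeries ℚ :=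
  PowerSeries.mk fun n => (n : ℚ) * PowerSeries.coeff n f

lemma coeff_D (f : PowerSeries ℚ) (n : ℕ) :
    coeff n (D f) = (n : ℚ) * coeff n f := coeff_mk _ _

lemma D_one : D 1 = 0 := by
  ext n
  rcases eq_or_ne n 0 with rfl | h
  · simp [coeff_D]
  · simp [coeff_D, coeff_one, h]

lemma D_sub (f g : PowerSeries ℚ) : D (f - g) = D f - D g := by
  ext n; simp only [coeff_D, map_sub]; ring

lemma D_mul (f g : PowerSeries ℚ) : D (f * g) = D f * g + f * D g := by
  ext n
  simp only [coeff_D, map_add, coeff_mul, Finset.mul_sum, ← Finset.sum_add_distrib]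
  refine Finset.sum_congr rfl ?_
  rintro ⟨i, j⟩ h
  rw [Finset.HasAntidiagonal.mem_antidiagonal] at h
  subst h; push_cast; ring

def sig (q : ℚ) (k : ℕ) : ℚ := ∑ i ∈ range k, q ^ i

lemma sig_zero (q : ℚ) : sig q 0 = 0 := by simp [sig]

lemma sig_one (q : ℚ) : sig q 1 = 1 := by simp [sig]

lemma sig_rec (q : ℚ) (j : ℕ) :
    sig q (j + 2) = (1 + q) * sig q (j + 1) - q * sig q j := by
  have h1 : sig q (j + 2) = sig q (j + 1) + q ^ (j + 1) := Finset.sum_range_succ _ _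
  have h2 : sig q (j + 1) = sig q j + q ^ j := Finset.sum_range_succ _ _
  rw [h1, h2]; ring

lemma sig_geom (q : ℚ) (j : ℕ) : (1 - q) * sig q j = 1 - q ^ j := by
  have := geom_sum_mul q j
  unfold sig
  linear_combination -this

def Tser (q c : ℚ) (d : ℕ) : PowerSeries ℚ :=
  PowerSeries.mk fun n =>
    if d ∣ n ∧ n ≠ 0 then (d : ℚ) * sig q (n / d) * c ^ (n / d) else 0

lemma key1 (q c : ℚ) (d : ℕ) (hd : 1 ≤ d) :
    Tser q c d * ((1 - C c * X ^ d) * (1 - C (q * c) * X ^ d)) =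
      C ((d : ℚ) * c) * X ^ d := by
  have hd0 : d ≠ 0 := by omega
  have huv : (1 - C c * X ^ d) * (1 - C (q * c) * X ^ d) =
      1 - C (c + q * c) * X ^ d + C (c * (q * c)) * X ^ (2 * d) := by
    simp only [map_add, map_mul]
    rw [two_mul, pow_add]
    ring
  rw [huv]
  ext n
  have e1 : Tser q c d * (1 - C (c + q * c) * X ^ d + C (c * (q * c)) * X ^ (2 * d)) =
      Tser q c d - C (c + q * c) * (Tser q c d * X ^ d)
        + C (c * (q * c)) * (Tser q c d * X ^ (2 * d)) := by ring
  rw [e1, map_add, map_sub, coeff_C_mul, coeff_C_mul, coeff_mul_X_pow', coeff_mul_X_pow',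
    coeff_C_mul_X_pow]
  simp only [Tser, coeff_mk]
  have hcoeffT : ∀ t : ℕ,
      (if d ∣ d * t ∧ d * t ≠ 0 then (d : ℚ) * sig q (d * t / d) * c ^ (d * t / d) else 0)
        = (d : ℚ) * sig q t * c ^ t := by
    intro t
    rcases Nat.eq_zero_or_pos t with rfl | ht
    · simp [sig_zero]
    · rw [if_pos ⟨Dvd.intro t rfl, by positivity⟩, Nat.mul_div_cancel_left t (by omega)]
  by_cases hdvd : d ∣ n
  · obtain ⟨k, rfl⟩ := hdvd
    match k with
    | 0 =>
        rw [Nat.mul_zero]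
        rw [if_neg (by simp), if_neg (by omega), if_neg (by omega), if_neg (by omega)]
        ring
    | 1 =>
        rw [Nat.mul_one]
        rw [if_pos ⟨dvd_refl d, hd0⟩, Nat.div_self (by omega), sig_one,
          if_pos (le_refl d), Nat.sub_self, if_neg (by simp), if_neg (by omega : ¬ 2 * d ≤ d),
          if_pos rfl]
        ring
    | (j+2) =>
        have e2 : d * (j + 2) - d = d * (j + 1) := by
          have : d * (j + 2) = d * (j + 1) + d := by ring
          omega
        have e3 : d * (j + 2) - 2 * d = d * j := by
          have : d * (j + 2) = d * j + 2 * d := by ring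
          omega
        have hle1 : d ≤ d * (j + 2) := by
          have : d * (j + 2) = d * j + 2 * d := by ring
          omega
        have hle2 : 2 * d ≤ d * (j + 2) := by
          have : d * (j + 2) = d * j + 2 * d := by ring
          omega
        have hne : d * (j + 2) ≠ d := by
          have : d * (j + 2) = d * j + 2 * d := by ring
          omega
        rw [hcoeffT (j+2), if_pos hle1, e2, hcoeffT (j+1), if_pos hle2, e3, hcoeffT j,
          if_neg hne, sig_rec q j]
        ring
  · have h1 : ¬(d ∣ n ∧ n ≠ 0) := fun h => hdvd h.1
    have h2 : d ≤ n → ¬(d ∣ n - d ∧ n - d ≠ 0) := by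
      intro hle h
      exact hdvd (by
        have := Nat.dvd_add h.1 (dvd_refl d)
        rwa [Nat.sub_add_cancel hle] at this)
    have h3 : 2 * d ≤ n → ¬(d ∣ n - 2 * d ∧ n - 2 * d ≠ 0) := by
      intro hle h
      exact hdvd (by
        have := Nat.dvd_add h.1 (dvd_mul_left d 2)
        rwa [Nat.sub_add_cancel hle] at this)
    have h4 : n ≠ d := fun h => hdvd (h ▸ dvd_refl d)
    rw [if_neg h1, if_neg h4]
    have A : (if d ≤ n then (if d ∣ n - d ∧ n - d ≠ 0
        then (d : ℚ) * sig q ((n - d) / d) * c ^ ((n - d) / d) else 0) else 0) = 0 := by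
      split_ifs with h h'
      · exact absurd h' (h2 h)
      · rfl
      · rfl
    have B : (if 2 * d ≤ n then (if d ∣ n - 2 * d ∧ n - 2 * d ≠ 0
        then (d : ℚ) * sig q ((n - 2 * d) / d) * c ^ ((n - 2 * d) / d) else 0) else 0) = 0 := by
      split_ifs with h h'
      · exact absurd h' (h3 h)
      · rfl
      · rfl
    rw [A, B]
    ring

lemma D_one_sub (a : ℚ) (d : ℕ) (hd : 1 ≤ d) :
    D (1 - C a * X ^ d) = -(C ((d : ℚ) * a) * X ^ d) := by
  ext n
  rw [coeff_D, map_sub, coeff_one, coeff_C_mul_X_pow, map_neg, coeff_C_mul_X_pow]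
  rcases eq_or_ne n d with rfl | h
  · rw [if_neg (by omega)]
    simp
  · rw [if_neg h, if_neg h]
    rcases eq_or_ne n 0 with rfl | h0
    · simp
    · simp [h0]

lemma key_factor (q c : ℚ) (d : ℕ) (hd : 1 ≤ d) :
    D (1 - C c * X ^ d) * (1 - C (q * c) * X ^ d)
      - (1 - C c * X ^ d) * D (1 - C (q * c) * X ^ d)
    = -(C (1 - q)) * Tser q c d * ((1 - C c * X ^ d) * (1 - C (q * c) * X ^ d)) := by
  rw [mul_assoc, key1 q c d hd, D_one_sub c d hd, D_one_sub (q * c) d hd]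
  simp only [map_mul, map_sub, map_one]
  ring

def Tp (q : ℚ) : PowerSeries ℚ :=
  PowerSeries.mk fun n => if n = 0 then 0 else (1 - q) ^ (n - 1)

def Rser (q : ℚ) : PowerSeries ℚ := 1 - C (1 - q) * X ^ 1

lemma claimB (q : ℚ) : D (Rser q) = -(C (1 - q)) * Tp q * Rser q := by
  have e : -(C (1 - q)) * Tp q * Rser q =
      -(C (1 - q) * Tp q) + C ((1 - q) * (1 - q)) * (Tp q * X ^ 1) := by
    rw [map_mul]; unfold Rser; ring
  ext n
  rw [e, map_add, map_neg, coeff_C_mul, coeff_C_mul, coeff_mul_X_pow', coeff_D]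
  unfold Rser Tp
  rw [map_sub, coeff_one, coeff_C_mul_X_pow, coeff_mk]
  match n with
  | 0 => norm_num
  | 1 => norm_num
  | (j+2) =>
      have e1 : j + 2 - 1 = j + 1 := rfl
      rw [e1, coeff_mk, if_neg (Nat.succ_ne_zero j)]
      have e2 : j + 1 - 1 = j := rfl
      rw [e2]
      split_ifs <;> first | ring1 | (exfalso; omega) | exact absurd ‹False› (by tauto)

lemma claimA (q : ℚ) (F : ℕ → ℚ) (N : ℕ) :
    D (∏ d ∈ Icc 1 N, (1 - C (F d) * X ^ d)) * (∏ d ∈ Icc 1 N, (1 - C (q * F d) * X ^ d))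
      - (∏ d ∈ Icc 1 N, (1 - C (F d) * X ^ d)) *
          D (∏ d ∈ Icc 1 N, (1 - C (q * F d) * X ^ d))
    = -(C (1 - q)) * (∑ d ∈ Icc 1 N, Tser q (F d) d) *
        ((∏ d ∈ Icc 1 N, (1 - C (F d) * X ^ d)) *
          (∏ d ∈ Icc 1 N, (1 - C (q * F d) * X ^ d))) := by
  induction N with
  | zero => simp [D_one]
  | succ k ih =>
      rw [Finset.prod_Icc_succ_top (by omega : 1 ≤ k + 1),
        Finset.prod_Icc_succ_top (by omega : 1 ≤ k + 1),
        Finset.sum_Icc_succ_top (by omega : 1 ≤ k + 1), D_mul, D_mul]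
      have hkf := key_factor q (F (k + 1)) (k + 1) (by omega)
      linear_combination
        ((1 - C (F (k + 1)) * X ^ (k + 1)) * (1 - C (q * F (k + 1)) * X ^ (k + 1))) * ih
        + ((∏ d ∈ Icc 1 k, (1 - C (F d) * X ^ d)) *
            (∏ d ∈ Icc 1 k, (1 - C (q * F d) * X ^ d))) * hkf

lemma comparison (N : ℕ) (c₀ : ℚ) (U V S T R : PowerSeries ℚ)
    (hA : D U * V - U * D V = -(C c₀) * S * (U * V))
    (hB : D R = -(C c₀) * T * R)
    (hS0 : coeff 0 S = 0)
    (hST : ∀ k, k ≤ N → coeff k S = coeff k T)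
    (hU0 : coeff 0 U = 1) (hV0 : coeff 0 V = 1) (hR0 : coeff 0 R = 1) :
    ∀ n, n ≤ N → coeff n U = coeff n (R * V) := by
  have hW : D (R * V) * V - (R * V) * D V = -(C c₀) * T * ((R * V) * V) := by
    rw [D_mul]; linear_combination (V * V) * hB
  have hΔ : D (U - R * V) * V - (U - R * V) * D V
      = -(C c₀) * (S * (U - R * V) + (S - T) * (R * V)) * V := by
    rw [D_sub]; linear_combination hA - hW
  intro n
  induction n using Nat.strong_induction_on with
  | _ n ih =>
    intro hnN
    have hΔsmall : ∀ j, j < n → coeff j (U - R * V) = 0 := by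
      intro j hj
      rw [map_sub, ih j hj (le_trans hj.le hnN), sub_self]
    rcases Nat.eq_zero_or_pos n with rfl | hn
    · simp [hU0, coeff_mul, hR0, hV0]
    · have hL : coeff n (D (U - R * V) * V - (U - R * V) * D V)
          = (n : ℚ) * coeff n (U - R * V) := by
        rw [map_sub, coeff_mul, coeff_mul, ← Finset.sum_sub_distrib]
        rw [Finset.sum_eq_single ((n, 0) : ℕ × ℕ)]
        · simp [coeff_D, hV0]
        · rintro ⟨i, j⟩ hp hne
          rw [Finset.HasAntidiagonal.mem_antidiagonal] at hp
          have hij : i < n := by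
            rcases Nat.lt_or_ge i n with h | h
            · exact h
            · exfalso; apply hne
              have hi : i = n := by omega
              have hj : j = 0 := by omega
              rw [hi, hj]
          simp [coeff_D, hΔsmall i hij]
        · intro h
          exact absurd (Finset.HasAntidiagonal.mem_antidiagonal.2 (add_zero n)) h
      have hG : ∀ i, i ≤ n → coeff i (S * (U - R * V) + (S - T) * (R * V)) = 0 := by
        intro i hi
        rw [map_add, coeff_mul, coeff_mul]
        have h1 : ∑ p ∈ antidiagonal i, coeff p.1 S * coeff p.2 (U - R * V) = 0 := by
          apply Finset.sum_eq_zero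
          rintro ⟨a, b⟩ hp
          rw [Finset.HasAntidiagonal.mem_antidiagonal] at hp
          rcases Nat.eq_zero_or_pos a with rfl | ha
          · rw [hS0, zero_mul]
          · have hb : b < n := by omega
            rw [hΔsmall b hb, mul_zero]
        have h2 : ∑ p ∈ antidiagonal i, coeff p.1 (S - T) * coeff p.2 (R * V) = 0 := by
          apply Finset.sum_eq_zero
          rintro ⟨a, b⟩ hp
          rw [Finset.HasAntidiagonal.mem_antidiagonal] at hp
          rw [map_sub, hST a (by omega), sub_self, zero_mul]
        rw [h1, h2, add_zero]
      have hRz : coeff n (-(C c₀) * (S * (U - R * V) + (S - T) * (R * V)) * V) = 0 := by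
        have e : -(C c₀) * (S * (U - R * V) + (S - T) * (R * V)) * V
            = C c₀ * (-((S * (U - R * V) + (S - T) * (R * V)) * V)) := by ring
        rw [e, coeff_C_mul, map_neg, coeff_mul]
        rw [Finset.sum_eq_zero]
        · simp
        · rintro ⟨a, b⟩ hp
          rw [Finset.HasAntidiagonal.mem_antidiagonal] at hp
          rw [hG a (by omega), zero_mul]
      have hcoeff := congrArg (coeff n) hΔ
      rw [hL, hRz] at hcoeff
      have hz : coeff n (U - R * V) = 0 := by
        have hn0 : (n : ℚ) ≠ 0 := Nat.cast_ne_zero.2 (by omega)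
        exact (mul_eq_zero.1 hcoeff).resolve_left hn0
      have h2 : coeff n U - coeff n (R * V) = 0 := by
        rw [← map_sub]; exact hz
      exact sub_eq_zero.1 h2

lemma dvd_prod_sub_prod {R : Type*} [CommRing R] (c : R) (s : Finset ℕ) (f g : ℕ → R)
    (h : ∀ i ∈ s, c ∣ f i - g i) : c ∣ ∏ i ∈ s, f i - ∏ i ∈ s, g i := by
  induction s using Finset.cons_induction with
  | empty => simp
  | cons a s ha ih =>
      rw [Finset.prod_cons, Finset.prod_cons]
      have h1 : c ∣ f a - g a := h a (Finset.mem_cons_self a s)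
      have h2 : c ∣ ∏ i ∈ s, f i - ∏ i ∈ s, g i :=
        ih fun i hi => h i (Finset.mem_cons.2 (Or.inr hi))
      have e : f a * ∏ i ∈ s, f i - g a * ∏ i ∈ s, g i
          = (f a - g a) * ∏ i ∈ s, f i + g a * (∏ i ∈ s, f i - ∏ i ∈ s, g i) := by ring
      rw [e]
      exact dvd_add (h1.mul_right _) (h2.mul_left _)

lemma const_one_sub (c : ℚ) (d : ℕ) (hd : 1 ≤ d) :
    coeff 0 ((1 : PowerSeries ℚ) - C c * X ^ d) = 1 := by
  rw [map_sub, coeff_one, coeff_C_mul_X_pow, if_pos rfl, if_neg (by omega)]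
  norm_num

lemma const_prod (F : ℕ → ℚ) (N : ℕ) :
    coeff 0 (∏ d ∈ Icc 1 N, ((1 : PowerSeries ℚ) - C (F d) * X ^ d)) = 1 := by
  rw [coeff_zero_eq_constantCoeff_apply, map_prod]
  apply Finset.prod_eq_one
  intro d hd
  rw [← coeff_zero_eq_constantCoeff_apply]
  exact const_one_sub (F d) d (by exact (Finset.mem_Icc.1 hd).1)

lemma const_R (q : ℚ) : coeff 0 (Rser q) = 1 := const_one_sub (1 - q) 1 le_rfl

lemma coeff_top (N : ℕ) (A : PowerSeries ℚ) (c : ℚ) :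
    coeff N (A * (1 - C c * X ^ N)) = coeff N A - c * coeff 0 A := by
  rw [mul_sub, mul_one, map_sub]
  have e : A * (C c * X ^ N) = C c * (A * X ^ N) := by ring
  rw [e, coeff_C_mul, coeff_mul_X_pow', if_pos (le_refl N), Nat.sub_self]

lemma map_one_sub_fac (z : ℤ) (d : ℕ) :
    PowerSeries.map (Int.castRingHom ℚ) (1 - C z * X ^ d)
      = 1 - C ((z : ℤ) : ℚ) * X ^ d := by
  rw [map_sub, map_one, map_mul, map_pow, PowerSeries.map_C, PowerSeries.map_X]
  norm_num

end Aux13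
end Aux13
open PowerSeries Finset
open Aux13 in
theorem stmt_13 (m : ℤ) (hm : m ≠ 1) (E : ℕ → ℚ)
    (hE : ∀ n : ℕ, 1 ≤ n →
      ∑ d ∈ n.divisors, (d : ℚ) * (1 - (m : ℚ) ^ (n / d)) * E d ^ (n / d) = 1)
    (n : ℕ) (hn : 1 ≤ n) :
    ∃ z : ℤ, (1 - (m : ℚ)) ^ n * E n = (z : ℚ) := by
  set q : ℚ := (m : ℚ) with hqdef
  have hq1 : q ≠ 1 := by
    rw [hqdef]
    exact_mod_cast hm
  have hq0 : (1 : ℚ) - q ≠ 0 := sub_ne_zero.2 (Ne.symm hq1)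
  set F : ℕ → ℚ := fun d => (1 - q) ^ d * E d with hFdef
  -- the scaled divisor-sum relation
  have hsig : ∀ k : ℕ, 1 ≤ k →
      ∑ d ∈ k.divisors, (d : ℚ) * sig q (k / d) * F d ^ (k / d) = (1 - q) ^ (k - 1) := by
    intro k hk
    have h := hE k hk
    calc ∑ d ∈ k.divisors, (d : ℚ) * sig q (k / d) * F d ^ (k / d)
        = ∑ d ∈ k.divisors, ((d : ℚ) * (1 - q ^ (k / d)) * E d ^ (k / d)) * (1 - q) ^ (k - 1) := by
          apply Finset.sum_congr rfl
          intro d hd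
          obtain ⟨hdvd, hk0⟩ := Nat.mem_divisors.1 hd
          have hmul : d * (k / d) = k := Nat.mul_div_cancel' hdvd
          have hF1 : F d ^ (k / d) = (1 - q) ^ k * E d ^ (k / d) := by
            rw [hFdef]
            simp only
            rw [mul_pow, ← pow_mul, hmul]
          have hgeom : (1 : ℚ) - q ^ (k / d) = (1 - q) * sig q (k / d) := (sig_geom q _).symm
          have hk' : ((1 : ℚ) - q) ^ k = (1 - q) * (1 - q) ^ (k - 1) := by
            conv_lhs => rw [show k = 1 + (k - 1) by omega]
            rw [pow_add, pow_one]
          rw [hF1, hgeom, hk']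
          ring
      _ = (∑ d ∈ k.divisors, (d : ℚ) * (1 - q ^ (k / d)) * E d ^ (k / d)) * (1 - q) ^ (k - 1) :=
          (Finset.sum_mul _ _ _).symm
      _ = (1 - q) ^ (k - 1) := by rw [h, one_mul]
  clear hE
  revert hn
  induction n using Nat.strong_induction_on with
  | _ n ih =>
    intro hn
    classical
    obtain ⟨k0, rfl⟩ : ∃ k0, n = k0 + 1 := ⟨n - 1, by omega⟩
    set N := k0 + 1 with hNdef
    -- coefficient comparison over ℚ
    have hS0 : coeff 0 (∑ d ∈ Icc 1 N, Tser q (F d) d) = 0 := by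
      rw [map_sum]
      apply Finset.sum_eq_zero
      intro d hd
      simp [Tser]
    have hST : ∀ j, j ≤ N →
        coeff j (∑ d ∈ Icc 1 N, Tser q (F d) d) = coeff j (Tp q) := by
      intro j hj
      rw [map_sum]
      simp only [Tser, coeff_mk]
      rcases Nat.eq_zero_or_pos j with rfl | hjpos
      · rw [Finset.sum_eq_zero]
        · simp [Tp]
        · intro d hd; rw [if_neg (by simp)]
      · have hfil : Finset.filter (fun d => d ∣ j ∧ j ≠ 0) (Icc 1 N) = j.divisors := by
          ext d
          simp only [Finset.mem_filter, Finset.mem_Icc, Nat.mem_divisors]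
          constructor
          · rintro ⟨_, hd⟩; exact hd
          · rintro ⟨hdvd, hj0⟩
            exact ⟨⟨Nat.pos_of_dvd_of_pos hdvd hjpos,
              le_trans (Nat.le_of_dvd hjpos hdvd) hj⟩, hdvd, hj0⟩
        rw [← Finset.sum_filter, hfil, hsig j hjpos]
        rw [Tp, coeff_mk, if_neg (by omega)]
    have hcomp := comparison N (1 - q)
      (∏ d ∈ Icc 1 N, (1 - C (F d) * X ^ d))
      (∏ d ∈ Icc 1 N, (1 - C (q * F d) * X ^ d))
      (∑ d ∈ Icc 1 N, Tser q (F d) d) (Tp q) (Rser q)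
      (claimA q F N) (claimB q) hS0 hST (const_prod F N) (const_prod (fun d => q * F d) N)
      (const_R q) N le_rfl
    -- peel off the top factor
    rw [Finset.prod_Icc_succ_top (by omega : 1 ≤ k0 + 1) (fun d => 1 - C (F d) * X ^ d),
      Finset.prod_Icc_succ_top (by omega : 1 ≤ k0 + 1) (fun d => 1 - C (q * F d) * X ^ d)]
      at hcomp
    rw [← mul_assoc] at hcomp
    rw [coeff_top, coeff_top] at hcomp
    have hc0U : coeff 0 (∏ d ∈ Icc 1 k0, (1 - C (F d) * X ^ d)) = 1 := const_prod F k0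
    have hc0RV : coeff 0 (Rser q * ∏ d ∈ Icc 1 k0, (1 - C (q * F d) * X ^ d)) = 1 := by
      rw [coeff_zero_eq_constantCoeff_apply, map_mul, ← coeff_zero_eq_constantCoeff_apply,
        ← coeff_zero_eq_constantCoeff_apply, const_R q, const_prod (fun d => q * F d) k0, mul_one]
    rw [hc0U, hc0RV, mul_one, mul_one] at hcomp
    -- hcomp : coeff N U' - F N = coeff N (R * V') - q * F N
    -- integer side
    set G : ℕ → ℤ := fun j =>
      if h : ∃ z : ℤ, (1 - q) ^ j * E j = (z : ℚ) then h.choose else 0 with hGdef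
    have hG : ∀ j, 1 ≤ j → j < N → ((G j : ℤ) : ℚ) = F j := by
      intro j h1 h2
      have hex : ∃ z : ℤ, (1 - q) ^ j * E j = (z : ℚ) := ih j h2 h1
      rw [hGdef]
      simp only [dif_pos hex]
      rw [hFdef]
      exact hex.choose_spec.symm
    have hmapU : PowerSeries.map (Int.castRingHom ℚ)
        (∏ d ∈ Icc 1 k0, (1 - C (G d) * X ^ d))
        = ∏ d ∈ Icc 1 k0, (1 - C (F d) * X ^ d) := by
      rw [map_prod]
      apply Finset.prod_congr rfl
      intro d hd
      obtain ⟨hd1, hd2⟩ := Finset.mem_Icc.1 hd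
      rw [map_one_sub_fac, hG d hd1 (by omega)]
    have hmapRV : PowerSeries.map (Int.castRingHom ℚ)
        ((1 - C (1 - m) * X ^ 1) * ∏ d ∈ Icc 1 k0, (1 - C (m * G d) * X ^ d))
        = Rser q * ∏ d ∈ Icc 1 k0, (1 - C (q * F d) * X ^ d) := by
      rw [map_mul, map_prod, map_one_sub_fac]
      have e1 : (((1 - m : ℤ) : ℚ)) = 1 - q := by push_cast [hqdef]; ring
      rw [e1]
      have e2 : ∀ d ∈ Icc 1 k0, PowerSeries.map (Int.castRingHom ℚ)
          (1 - C (m * G d) * X ^ d) = 1 - C (q * F d) * X ^ d := by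
        intro d hd
        obtain ⟨hd1, hd2⟩ := Finset.mem_Icc.1 hd
        rw [map_one_sub_fac]
        have : ((m * G d : ℤ) : ℚ) = q * F d := by
          push_cast
          rw [hG d hd1 (by omega), hqdef]
        rw [this]
      rw [Finset.prod_congr rfl e2]
      rfl
    -- divisibility over ℤ
    have hdvdZ : (1 - m) ∣ (PowerSeries.coeff N (∏ d ∈ Icc 1 k0, (1 - C (G d) * X ^ d))
        - PowerSeries.coeff N ((1 - C (1 - m) * X ^ 1) *
            ∏ d ∈ Icc 1 k0, (1 - C (m * G d) * X ^ d))) := by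
      have h1 : C (1 - m) ∣ ((∏ d ∈ Icc 1 k0, (1 - C (G d) * X ^ d))
          - ∏ d ∈ Icc 1 k0, (1 - C (m * G d) * X ^ d)) := by
        apply dvd_prod_sub_prod
        intro d hd
        refine ⟨-(C (G d) * X ^ d), ?_⟩
        have : (C (m * G d)) = C m * C (G d) := by rw [map_mul]
        rw [this]
        have e : (C (1 - m)) = 1 - C m := by rw [map_sub, map_one]
        rw [e]
        ring
      have h2 : C (1 - m) ∣ ((∏ d ∈ Icc 1 k0, (1 - C (G d) * X ^ d))
          - (1 - C (1 - m) * X ^ 1) * ∏ d ∈ Icc 1 k0, (1 - C (m * G d) * X ^ d)) := by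
        have e : (∏ d ∈ Icc 1 k0, (1 - C (G d) * X ^ d))
            - (1 - C (1 - m) * X ^ 1) * ∏ d ∈ Icc 1 k0, (1 - C (m * G d) * X ^ d)
            = ((∏ d ∈ Icc 1 k0, (1 - C (G d) * X ^ d))
                - ∏ d ∈ Icc 1 k0, (1 - C (m * G d) * X ^ d))
              + C (1 - m) * (X ^ 1 * ∏ d ∈ Icc 1 k0, (1 - C (m * G d) * X ^ d)) := by
          ring
        rw [e]
        exact dvd_add h1 (Dvd.intro _ rfl)
      obtain ⟨S, hS⟩ := h2
      refine ⟨PowerSeries.coeff N S, ?_⟩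
      rw [← map_sub, hS, coeff_C_mul]
    obtain ⟨w, hw⟩ := hdvdZ
    -- transfer to ℚ
    have hcastU : coeff N (∏ d ∈ Icc 1 k0, (1 - C (F d) * X ^ d))
        = ((PowerSeries.coeff N (∏ d ∈ Icc 1 k0, (1 - C (G d) * X ^ d)) : ℤ) : ℚ) := by
      rw [← hmapU, PowerSeries.coeff_map]
      rfl
    have hcastRV : coeff N (Rser q * ∏ d ∈ Icc 1 k0, (1 - C (q * F d) * X ^ d))
        = ((PowerSeries.coeff N ((1 - C (1 - m) * X ^ 1) *
            ∏ d ∈ Icc 1 k0, (1 - C (m * G d) * X ^ d)) : ℤ) : ℚ) := by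
      rw [← hmapRV, PowerSeries.coeff_map]
      rfl
    refine ⟨w, ?_⟩
    have hfinal : (1 - q) * F N = (1 - q) * (w : ℚ) := by
      have e1 : (1 - q) * F N
          = coeff N (∏ d ∈ Icc 1 k0, (1 - C (F d) * X ^ d))
            - coeff N (Rser q * ∏ d ∈ Icc 1 k0, (1 - C (q * F d) * X ^ d)) := by
        linear_combination -hcomp
      rw [e1, hcastU, hcastRV, ← Int.cast_sub, hw]
      push_cast [hqdef]
      ring
    have := mul_left_cancel₀ hq0 hfinal
    rw [hFdef] at this
    exact this
end

section
/- Fix an integer m and let μ_m : ℕ≥1 → ℤ be defined by μ_m(1) = 1 and ∑_{d ∣ n} [n/d]_m · μ_m(d) = 0 for n > 1, where [k]_m = ∑_{i=0}^{k−1} m^i. Then for every positive integer n, n divides (1 − m) · ∑_{e ∣ n} [n/e]_m² · μ_m(e). -/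
namespace Stmt14

open Finset ArithmeticFunction

/-- geometric sum `1 + m + ... + m^(k-1)` -/
def gs (m : ℤ) (k : ℕ) : ℤ := ∑ i ∈ Finset.range k, m ^ i

lemma gs_succ (m : ℤ) (k : ℕ) : gs m (k + 1) = gs m k + m ^ k :=
  Finset.sum_range_succ _ _

lemma gs_add (m : ℤ) (a b : ℕ) : gs m (a + b) = gs m a + m ^ a * gs m b := by
  induction b with
  | zero => simp [gs]
  | succ b ih =>
      rw [show a + (b + 1) = (a + b) + 1 from rfl, gs_succ, ih, gs_succ, pow_add]
      ring

lemma gs_mul (m : ℤ) (a b : ℕ) :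
    gs m (a * b) = (∑ r ∈ Finset.range a, (m ^ b) ^ r) * gs m b := by
  induction a with
  | zero => simp [gs]
  | succ a ih =>
      rw [show (a + 1) * b = a * b + b from by ring, gs_add, ih,
        Finset.sum_range_succ, ← pow_mul']
      ring

lemma geom_eval (m : ℤ) (k : ℕ) : (1 - m) * gs m k = 1 - m ^ k := by
  have h := geom_sum_mul m k
  rw [gs]
  linarith

lemma gs_two_mul (m : ℤ) (k : ℕ) : gs m (2 * k) = (1 + m ^ k) * gs m k := by
  rw [gs_mul]
  congr 1
  rw [Finset.sum_range_succ, Finset.sum_range_one]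
  ring

lemma key_pointwise (m : ℤ) (k : ℕ) :
    (1 - m) * gs m k ^ 2 = 2 * gs m k - gs m (2 * k) := by
  have h1 := geom_eval m k
  rw [gs_two_mul]
  calc (1 - m) * gs m k ^ 2 = ((1 - m) * gs m k) * gs m k := by ring
    _ = (1 - m ^ k) * gs m k := by rw [h1]
    _ = 2 * gs m k - (1 + m ^ k) * gs m k := by ring

lemma int_dvd_pow_sub {p : ℕ} (hp : p.Prime) (y : ℤ) : (p : ℤ) ∣ y ^ p - y := by
  haveI : Fact p.Prime := ⟨hp⟩
  rw [← ZMod.intCast_zmod_eq_zero_iff_dvd]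
  push_cast
  rw [ZMod.pow_card, sub_self]

def A (x : ℤ) (t : ℕ) : ℤ := ∑ d ∈ t.divisors, (moebius (t / d)) * (x ^ d - 1)

lemma A_one (x : ℤ) : A x 1 = x - 1 := by
  simp [A, Nat.divisors_one]

lemma A_mul_of_dvd {p : ℕ} (hp : p.Prime) {t : ℕ} (ht : p ∣ t) (ht0 : t ≠ 0) (x : ℤ) :
    A x (p * t) = A (x ^ p) t := by
  have hp0 : p ≠ 0 := hp.ne_zero
  rw [A, A, ← Finset.sum_filter_add_sum_filter_not ((p * t).divisors) (p ∣ ·)]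
  have h2 : ∑ d ∈ ((p * t).divisors.filter (fun d => ¬ p ∣ d)),
      (moebius ((p * t) / d)) * (x ^ d - 1) = 0 := by
    apply Finset.sum_eq_zero
    intro d hd
    rw [Finset.mem_filter, Nat.mem_divisors] at hd
    obtain ⟨⟨hdvd, hne⟩, hpd⟩ := hd
    have h4 : ((p * t) / d) * d = p * t := Nat.div_mul_cancel hdvd
    have h5 : p * p ∣ p * t := mul_dvd_mul_left p ht
    have h6 : Nat.Coprime (p * p) d :=
      Nat.Coprime.mul ((hp.coprime_iff_not_dvd).mpr hpd) ((hp.coprime_iff_not_dvd).mpr hpd)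
    have h3 : p * p ∣ (p * t) / d := by
      apply h6.dvd_of_dvd_mul_right
      rw [h4]
      exact h5
    have h7 : ¬ Squarefree ((p * t) / d) := fun hsq => hp.ne_one (Nat.isUnit_iff.mp (hsq p h3))
    rw [moebius_eq_zero_of_not_squarefree h7, zero_mul]
  rw [h2, add_zero]
  refine Finset.sum_bij' (fun d _ => d / p) (fun e _ => p * e) ?_ ?_ ?_ ?_ ?_
  · intro d hd
    rw [Finset.mem_filter, Nat.mem_divisors] at hd
    obtain ⟨⟨hdvd, _⟩, hpd⟩ := hd
    obtain ⟨e, rfl⟩ := hpd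
    rw [Nat.mul_div_cancel_left e hp.pos]
    rw [Nat.mem_divisors]
    exact ⟨(mul_dvd_mul_iff_left hp0).mp hdvd, ht0⟩
  · intro e he
    rw [Nat.mem_divisors] at he
    rw [Finset.mem_filter, Nat.mem_divisors]
    exact ⟨⟨mul_dvd_mul_left p he.1, Nat.mul_ne_zero hp0 ht0⟩, Dvd.intro e rfl⟩
  · intro d hd
    rw [Finset.mem_filter] at hd
    exact Nat.mul_div_cancel' hd.2
  · intro e he
    exact Nat.mul_div_cancel_left e hp.pos
  · intro d hd
    rw [Finset.mem_filter] at hd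
    obtain ⟨e, rfl⟩ := hd.2
    rw [Nat.mul_div_cancel_left e hp.pos, Nat.mul_div_mul_left _ _ hp.pos, pow_mul]

lemma A_mul_of_not_dvd {p : ℕ} (hp : p.Prime) {s : ℕ} (hps : ¬ p ∣ s) (hs0 : s ≠ 0) (x : ℤ) :
    A x (p * s) = A (x ^ p) s - A x s := by
  have hp0 : p ≠ 0 := hp.ne_zero
  rw [A, ← Finset.sum_filter_add_sum_filter_not ((p * s).divisors) (p ∣ ·)]
  have e2 : ((p * s).divisors.filter (fun d => ¬ p ∣ d)) = s.divisors := by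
    ext d
    rw [Finset.mem_filter, Nat.mem_divisors, Nat.mem_divisors]
    constructor
    · rintro ⟨⟨hdvd, _⟩, hpd⟩
      refine ⟨?_, hs0⟩
      have hcop : Nat.Coprime d p := ((hp.coprime_iff_not_dvd).mpr hpd).symm
      exact hcop.dvd_of_dvd_mul_left hdvd
    · rintro ⟨hdvd, _⟩
      exact ⟨⟨hdvd.mul_left p, by positivity⟩, fun h => hps (h.trans hdvd)⟩
  have e3 : ∑ d ∈ s.divisors, (moebius ((p * s) / d)) * (x ^ d - 1) = - A x s := by
    rw [A, ← Finset.sum_neg_distrib]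
    apply Finset.sum_congr rfl
    intro d hd
    rw [Nat.mem_divisors] at hd
    have h1 : (p * s) / d = p * (s / d) := Nat.mul_div_assoc p hd.1
    have h2 : ¬ p ∣ (s / d) := fun h => hps (h.trans (Nat.div_dvd_of_dvd hd.1))
    rw [h1, isMultiplicative_moebius.map_mul_of_coprime ((hp.coprime_iff_not_dvd).mpr h2),
      moebius_apply_prime hp]
    ring
  have e1 : ∑ d ∈ ((p * s).divisors.filter (p ∣ ·)), (moebius ((p * s) / d)) * (x ^ d - 1)
      = A (x ^ p) s := by
    rw [A]
    refine Finset.sum_bij' (fun d _ => d / p) (fun e _ => p * e) ?_ ?_ ?_ ?_ ?_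
    · intro d hd
      rw [Finset.mem_filter, Nat.mem_divisors] at hd
      obtain ⟨⟨hdvd, _⟩, hpd⟩ := hd
      obtain ⟨e, rfl⟩ := hpd
      rw [Nat.mul_div_cancel_left e hp.pos, Nat.mem_divisors]
      exact ⟨(mul_dvd_mul_iff_left hp0).mp hdvd, hs0⟩
    · intro e he
      rw [Nat.mem_divisors] at he
      rw [Finset.mem_filter, Nat.mem_divisors]
      exact ⟨⟨mul_dvd_mul_left p he.1, Nat.mul_ne_zero hp0 hs0⟩, Dvd.intro e rfl⟩
    · intro d hd
      rw [Finset.mem_filter] at hd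
      exact Nat.mul_div_cancel' hd.2
    · intro e he
      exact Nat.mul_div_cancel_left e hp.pos
    · intro d hd
      rw [Finset.mem_filter] at hd
      obtain ⟨e, rfl⟩ := hd.2
      rw [Nat.mul_div_cancel_left e hp.pos, Nat.mul_div_mul_left _ _ hp.pos, pow_mul]
  rw [e2, e3, e1]
  ring

lemma A_pow_mul {p : ℕ} (hp : p.Prime) {s : ℕ} (hps : ¬ p ∣ s) (hs0 : s ≠ 0) :
    ∀ (a : ℕ) (x : ℤ), A x (p ^ (a + 1) * s) = A (x ^ (p ^ (a + 1))) s - A (x ^ (p ^ a)) s := by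
  intro a
  induction a with
  | zero =>
      intro x
      simpa [pow_one] using A_mul_of_not_dvd hp hps hs0 x
  | succ a ih =>
      intro x
      have h1 : p ^ (a + 2) * s = p * (p ^ (a + 1) * s) := by ring
      have h2 : p ∣ p ^ (a + 1) * s := (dvd_pow_self p (Nat.succ_ne_zero a)).mul_right s
      have h3 : p ^ (a + 1) * s ≠ 0 := Nat.mul_ne_zero (pow_ne_zero _ hp.ne_zero) hs0
      rw [h1, A_mul_of_dvd hp h2 h3, ih (x ^ p), ← pow_mul, ← pow_mul, ← pow_succ', ← pow_succ']

lemma pow_dvd_A {p : ℕ} (hp : p.Prime) {s : ℕ} (hps : ¬ p ∣ s) (hs0 : s ≠ 0) (a : ℕ) (x : ℤ) :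
    (p : ℤ) ^ a ∣ A x (p ^ a * s) := by
  cases a with
  | zero => simp
  | succ a =>
      rw [A_pow_mul hp hps hs0 a x, A, A, ← Finset.sum_sub_distrib]
      apply Finset.dvd_sum
      intro d _
      have h1 : (moebius (s / d) : ℤ) * ((x ^ p ^ (a + 1)) ^ d - 1)
          - (moebius (s / d) : ℤ) * ((x ^ p ^ a) ^ d - 1)
          = (moebius (s / d) : ℤ) * (((x ^ d) ^ p) ^ p ^ a - (x ^ d) ^ p ^ a) := by
        rw [← pow_mul x (p ^ (a+1)) d, ← pow_mul x (p ^ a) d, ← pow_mul (x ^ d) p (p ^ a),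
          ← pow_mul x d (p * p ^ a), ← pow_mul x d (p ^ a)]
        ring_nf
      rw [h1]
      exact Dvd.dvd.mul_left (dvd_sub_pow_of_dvd_sub (int_dvd_pow_sub hp (x ^ d)) a) _

lemma natCast_dvd_of_prime_pow {t : ℕ} (ht : t ≠ 0) {X : ℤ}
    (h : ∀ q : ℕ, q.Prime → (q : ℤ) ^ (t.factorization q) ∣ X) : (t : ℤ) ∣ X := by
  have h0 : t = ∏ q ∈ t.primeFactors, q ^ (t.factorization q) :=
    (Nat.factorization_prod_pow_eq_self ht).symm
  have h1 : (t : ℤ) = ∏ q ∈ t.primeFactors, (q : ℤ) ^ (t.factorization q) := by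
    conv_lhs => rw [h0]
    push_cast
    rfl
  rw [h1]
  apply Finset.prod_dvd_of_coprime
  · intro a ha b hb hab
    have pa := Nat.prime_of_mem_primeFactors ha
    have pb := Nat.prime_of_mem_primeFactors hb
    exact (Nat.Coprime.isCoprime ((Nat.coprime_primes pa pb).mpr hab)).pow
  · intro q hq
    exact h q (Nat.prime_of_mem_primeFactors hq)

lemma nat_dvd_A (x : ℤ) {t : ℕ} (ht : t ≠ 0) : (t : ℤ) ∣ A x t := by
  apply natCast_dvd_of_prime_pow ht
  intro q hq
  have h1 : t = q ^ (t.factorization q) * (t / q ^ (t.factorization q)) :=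
    (Nat.ordProj_mul_ordCompl_eq_self t q).symm
  have h2 : ¬ q ∣ (t / q ^ (t.factorization q)) := Nat.not_dvd_ordCompl hq ht
  have h3 : (t / q ^ (t.factorization q)) ≠ 0 := (Nat.ordCompl_pos q ht).ne'
  rw [show A x t = A x (q ^ (t.factorization q) * (t / q ^ (t.factorization q))) from by rw [← h1]]
  exact pow_dvd_A hq h2 h3 _ x

def muAF (mu : ℕ → ℤ) : ArithmeticFunction ℤ := ⟨fun k => if k = 0 then 0 else mu k, by simp⟩

def LAF (m : ℤ) : ArithmeticFunction ℤ := ⟨fun k => gs m k, by simp [gs]⟩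

def L2AF (m : ℤ) : ArithmeticFunction ℤ := ⟨fun k => gs m (2 * k), by simp [gs]⟩

def fAF (x : ℤ) : ArithmeticFunction ℤ := ⟨fun k => x ^ k - 1, by simp⟩

def BAF (m : ℤ) (mu : ℕ → ℤ) : ArithmeticFunction ℤ := L2AF m * muAF mu

def wAF (x : ℤ) : ArithmeticFunction ℤ := (moebius : ArithmeticFunction ℤ) * fAF x

lemma muAF_apply (mu : ℕ → ℤ) {k : ℕ} (hk : k ≠ 0) : muAF mu k = mu k := by
  simp [muAF, hk]

lemma LAF_apply (m : ℤ) (k : ℕ) : LAF m k = gs m k := rfl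

lemma L2AF_apply (m : ℤ) (k : ℕ) : L2AF m k = gs m (2 * k) := rfl

lemma fAF_apply (x : ℤ) (k : ℕ) : fAF x k = x ^ k - 1 := rfl

section withhyp

variable (m : ℤ) (mu : ℕ → ℤ)

lemma L_mul_mu (h1 : mu 1 = 1)
    (hrec : ∀ n : ℕ, 1 < n →
      ∑ d ∈ n.divisors, (∑ i ∈ Finset.range (n / d), m ^ i) * mu d = 0) : LAF m * muAF mu = 1 := by
  ext n
  rw [mul_apply, Nat.sum_divisorsAntidiagonal' (f := fun a b => LAF m a * muAF mu b)]
  rcases eq_or_ne n 0 with rfl | hn0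
  · simp
  rcases eq_or_ne n 1 with rfl | hn1
  · rw [Nat.divisors_one, Finset.sum_singleton, one_one]
    rw [Nat.div_self Nat.one_pos, LAF_apply, muAF_apply mu one_ne_zero, h1]
    simp [gs]
  · rw [one_apply_ne hn1, ← hrec n (by omega)]
    apply Finset.sum_congr rfl
    intro d hd
    have hd0 : d ≠ 0 := (Nat.pos_of_mem_divisors hd).ne'
    rw [LAF_apply, muAF_apply mu hd0]
    rfl

lemma B_apply (n : ℕ) :
    BAF m mu n = ∑ d ∈ n.divisors, gs m (2 * (n / d)) * mu d := by
  rw [BAF, mul_apply, Nat.sum_divisorsAntidiagonal' (f := fun a b => L2AF m a * muAF mu b)]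
  apply Finset.sum_congr rfl
  intro d hd
  have hd0 : d ≠ 0 := (Nat.pos_of_mem_divisors hd).ne'
  rw [L2AF_apply, muAF_apply mu hd0]

lemma w_apply (x : ℤ) (t : ℕ) : wAF x t = A x t := by
  rw [wAF, mul_apply, Nat.sum_divisorsAntidiagonal' (f := fun a b => moebius a * fAF x b), A]
  rfl

lemma f_mul_B (h1 : mu 1 = 1)
    (hrec : ∀ n : ℕ, 1 < n →
      ∑ d ∈ n.divisors, (∑ i ∈ Finset.range (n / d), m ^ i) * mu d = 0) : fAF m * BAF m mu = fAF (m * m) := by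
  have hLB : LAF m * BAF m mu = L2AF m := by
    rw [BAF, mul_left_comm, L_mul_mu m mu h1 hrec, mul_one]
  ext n
  rw [mul_apply, Nat.sum_divisorsAntidiagonal (f := fun a b => fAF m a * BAF m mu b)]
  have hstep : ∀ d ∈ n.divisors, fAF m d * BAF m mu (n / d)
      = (LAF m d * BAF m mu (n / d)) * (m - 1) := by
    intro d _
    rw [fAF_apply, LAF_apply, ← geom_sum_mul m d, ← gs]
    ring
  rw [Finset.sum_congr rfl hstep, ← Finset.sum_mul,
    ← Nat.sum_divisorsAntidiagonal (f := fun a b => LAF m a * BAF m mu b), ← mul_apply, hLB]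
  rw [L2AF_apply, fAF_apply, gs, geom_sum_mul, pow_mul]
  ring_nf

lemma w_mul_B (h1 : mu 1 = 1)
    (hrec : ∀ n : ℕ, 1 < n →
      ∑ d ∈ n.divisors, (∑ i ∈ Finset.range (n / d), m ^ i) * mu d = 0) : wAF m * BAF m mu = wAF (m * m) := by
  rw [wAF, mul_assoc, f_mul_B m mu h1 hrec, wAF]

lemma key_eq (h1 : mu 1 = 1)
    (hrec : ∀ n : ℕ, 1 < n →
      ∑ d ∈ n.divisors, (∑ i ∈ Finset.range (n / d), m ^ i) * mu d = 0) (n : ℕ) :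
    ∑ d ∈ n.divisors, A m (n / d) * BAF m mu d = A (m * m) n := by
  have h := congrArg (fun f : ArithmeticFunction ℤ => f n) (w_mul_B m mu h1 hrec)
  rw [mul_apply, Nat.sum_divisorsAntidiagonal' (f := fun a b => wAF m a * BAF m mu b)] at h
  simp only [w_apply] at h
  exact h

lemma split_pow_dvd {p : ℕ} (hp : p.Prime) {n d k : ℕ} (hn : n ≠ 0) (hd : d ∣ n)
    (hk : p ^ k ∣ n) : ∃ j₁ j₂ : ℕ, j₁ + j₂ = k ∧ p ^ j₁ ∣ n / d ∧ p ^ j₂ ∣ d := by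
  have hd0 : d ≠ 0 := by
    rintro rfl
    exact hn (Nat.eq_zero_of_zero_dvd hd)
  have hnd0 : n / d ≠ 0 := (Nat.div_pos (Nat.le_of_dvd (Nat.pos_of_ne_zero hn) hd)
    (Nat.pos_of_ne_zero hd0)).ne'
  have hfact : n.factorization p = (n / d).factorization p + d.factorization p := by
    conv_lhs => rw [← Nat.div_mul_cancel hd]
    rw [Nat.factorization_mul hnd0 hd0]
    simp
  have hk' : k ≤ n.factorization p := (Nat.Prime.pow_dvd_iff_le_factorization hp hn).mp hk
  refine ⟨k - min k (d.factorization p), min k (d.factorization p), by omega, ?_, ?_⟩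
  · exact (Nat.Prime.pow_dvd_iff_le_factorization hp hnd0).mpr (by omega)
  · exact (Nat.Prime.pow_dvd_iff_le_factorization hp hd0).mpr (by omega)

lemma dvd_gs_of_dvd {p : ℕ} (hp : p.Prime) {m : ℤ} (hpm : (p : ℤ) ∣ (m - 1)) :
    ∀ (j t : ℕ), p ^ j ∣ t → (p : ℤ) ^ j ∣ gs m t := by
  intro j
  induction j with
  | zero => simp
  | succ j ih =>
      intro t hjt
      have hpt : p ∣ t := (dvd_pow_self p (Nat.succ_ne_zero j)).trans hjt
      obtain ⟨t', rfl⟩ := hpt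
      have ht' : p ^ j ∣ t' := by
        rw [pow_succ'] at hjt
        exact (mul_dvd_mul_iff_left hp.ne_zero).mp hjt
      rw [gs_mul m p t']
      have hPhi : (p : ℤ) ∣ ∑ r ∈ Finset.range p, (m ^ t') ^ r := by
        have h2 : ∑ r ∈ Finset.range p, (m ^ t') ^ r
            = (∑ r ∈ Finset.range p, ((m ^ t') ^ r - 1)) + p := by
          rw [Finset.sum_sub_distrib, Finset.sum_const, Finset.card_range]
          push_cast
          ring
        rw [h2]
        refine dvd_add (Finset.dvd_sum fun r _ => ?_) dvd_rfl
        have d1 : (m - 1) ∣ (m ^ t' - 1) := by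
          simpa using sub_dvd_pow_sub_pow m 1 t'
        have d2 : (m ^ t' - 1) ∣ ((m ^ t') ^ r - 1) := by
          simpa using sub_dvd_pow_sub_pow (m ^ t') 1 r
        exact hpm.trans (d1.trans d2)
      rw [pow_succ']
      exact mul_dvd_mul hPhi (ih t' ht')

lemma dvd_mu (m : ℤ) (mu : ℕ → ℤ)
    (hrec : ∀ n : ℕ, 1 < n →
      ∑ d ∈ n.divisors, (∑ i ∈ Finset.range (n / d), m ^ i) * mu d = 0)
    {p : ℕ} (hp : p.Prime) (hpm : (p : ℤ) ∣ (m - 1)) :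
    ∀ e : ℕ, e ≠ 0 → ∀ j : ℕ, p ^ j ∣ e → (p : ℤ) ^ j ∣ mu e := by
  intro e
  induction e using Nat.strong_induction_on with
  | _ e IH =>
    intro he j hj
    rcases eq_or_ne e 1 with rfl | he1
    · have hj0 : j = 0 := by
        by_contra hne
        have : p ∣ 1 := (dvd_pow_self p hne).trans hj
        exact hp.one_lt.ne' (Nat.dvd_one.mp this)
      subst hj0
      simpa using one_dvd _
    · have h2 := hrec e (by omega)
      rw [← Nat.cons_self_properDivisors he, Finset.sum_cons, Nat.div_self
        (Nat.pos_of_ne_zero he)] at h2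
      simp only [Finset.sum_range_one, pow_zero, one_mul] at h2
      have h3 : mu e = - ∑ d ∈ e.properDivisors, (∑ i ∈ Finset.range (e / d), m ^ i) * mu d := by
        linarith
      rw [h3, dvd_neg]
      apply Finset.dvd_sum
      intro d hd
      have hdmem := Nat.mem_properDivisors.mp hd
      have hd0 : d ≠ 0 := (Nat.pos_of_mem_properDivisors hd).ne'
      obtain ⟨j₁, j₂, hsum, hj₁, hj₂⟩ := split_pow_dvd hp he hdmem.1 hj
      rw [← hsum, pow_add]
      exact mul_dvd_mul (dvd_gs_of_dvd hp hpm j₁ _ hj₁) (IH d hdmem.2 hd0 j₂ hj₂)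

lemma caseA (m : ℤ) (mu : ℕ → ℤ)
    (hrec : ∀ n : ℕ, 1 < n →
      ∑ d ∈ n.divisors, (∑ i ∈ Finset.range (n / d), m ^ i) * mu d = 0)
    {p : ℕ} (hp : p.Prime) (hpm : (p : ℤ) ∣ (m - 1)) {n k : ℕ} (hn : n ≠ 0)
    (hk : p ^ k ∣ n) : (p : ℤ) ^ k ∣ BAF m mu n := by
  rw [B_apply]
  apply Finset.dvd_sum
  intro d hd
  have hdvd : d ∣ n := (Nat.mem_divisors.mp hd).1
  have hd0 : d ≠ 0 := (Nat.pos_of_mem_divisors hd).ne'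
  obtain ⟨j₁, j₂, hsum, hj₁, hj₂⟩ := split_pow_dvd hp hn hdvd hk
  rw [← hsum, pow_add]
  exact mul_dvd_mul (dvd_gs_of_dvd hp hpm j₁ _ (hj₁.mul_left 2))
    (dvd_mu m mu hrec hp hpm d hd0 j₂ hj₂)

lemma caseB (m : ℤ) (mu : ℕ → ℤ) (h1 : mu 1 = 1)
    (hrec : ∀ n : ℕ, 1 < n →
      ∑ d ∈ n.divisors, (∑ i ∈ Finset.range (n / d), m ^ i) * mu d = 0)
    {p : ℕ} (hp : p.Prime) (hpm : ¬ (p : ℤ) ∣ (m - 1)) :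
    ∀ n : ℕ, n ≠ 0 → ∀ k : ℕ, p ^ k ∣ n → (p : ℤ) ^ k ∣ BAF m mu n := by
  intro n
  induction n using Nat.strong_induction_on with
  | _ n IH =>
    intro hn k hk
    have hkey := key_eq m mu h1 hrec n
    rw [← Nat.cons_self_properDivisors hn, Finset.sum_cons, Nat.div_self
      (Nat.pos_of_ne_zero hn), A_one] at hkey
    have hcast : (p : ℤ) ^ k ∣ (n : ℤ) := by
      have := Int.natCast_dvd_natCast.mpr hk
      push_cast at this
      exact this
    have hdvd1 : (p : ℤ) ^ k ∣ A (m * m) n := hcast.trans (nat_dvd_A (m * m) hn)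
    have hdvd2 : (p : ℤ) ^ k ∣ ∑ d ∈ n.properDivisors, A m (n / d) * BAF m mu d := by
      apply Finset.dvd_sum
      intro d hd
      have hdp := Nat.mem_properDivisors.mp hd
      have hd0 : d ≠ 0 := (Nat.pos_of_mem_properDivisors hd).ne'
      obtain ⟨j₁, j₂, hsum, hj₁, hj₂⟩ := split_pow_dvd hp hn hdp.1 hk
      have hnd0 : n / d ≠ 0 := (Nat.div_pos (Nat.le_of_dvd (Nat.pos_of_ne_zero hn) hdp.1)
        (Nat.pos_of_ne_zero hd0)).ne'
      have t1 : (p : ℤ) ^ j₁ ∣ A m (n / d) := by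
        have hc : (p : ℤ) ^ j₁ ∣ ((n / d : ℕ) : ℤ) := by
          have := Int.natCast_dvd_natCast.mpr hj₁
          push_cast at this
          exact this
        exact hc.trans (nat_dvd_A m hnd0)
      rw [← hsum, pow_add]
      exact mul_dvd_mul t1 (IH d hdp.2 hd0 j₂ hj₂)
    have hfin : (p : ℤ) ^ k ∣ (m - 1) * BAF m mu n := by
      have heq : (m - 1) * BAF m mu n
          = A (m * m) n - ∑ d ∈ n.properDivisors, A m (n / d) * BAF m mu d := by
        linarith
      rw [heq]
      exact dvd_sub hdvd1 hdvd2
    have hcop : IsCoprime ((p : ℤ) ^ k) (m - 1) := by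
      apply IsCoprime.pow_left
      have hirr : Irreducible (p : ℤ) := (Nat.prime_iff_prime_int.mp hp).irreducible
      exact hirr.coprime_iff_not_dvd.mpr hpm
    exact hcop.dvd_of_dvd_mul_left hfin

lemma n_dvd_B (m : ℤ) (mu : ℕ → ℤ) (h1 : mu 1 = 1)
    (hrec : ∀ n : ℕ, 1 < n →
      ∑ d ∈ n.divisors, (∑ i ∈ Finset.range (n / d), m ^ i) * mu d = 0)
    {n : ℕ} (hn : n ≠ 0) : (n : ℤ) ∣ BAF m mu n := by
  apply natCast_dvd_of_prime_pow hn
  intro q hq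
  by_cases hqm : (q : ℤ) ∣ (m - 1)
  · exact caseA m mu hrec hq hqm hn (Nat.ordProj_dvd n q)
  · exact caseB m mu h1 hrec hq hqm n hn _ (Nat.ordProj_dvd n q)

end withhyp

end Stmt14

theorem stmt_14 (m : ℤ) (μ : ℕ → ℤ) (h1 : μ 1 = 1)
    (hrec : ∀ n : ℕ, 1 < n →
      ∑ d ∈ n.divisors, (∑ i ∈ Finset.range (n / d), m ^ i) * μ d = 0)
    (n : ℕ) (hn : 0 < n) :
    (n : ℤ) ∣ (1 - m) * ∑ e ∈ n.divisors,
      (∑ i ∈ Finset.range (n / e), m ^ i) ^ 2 * μ e := by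
  rcases eq_or_ne n 1 with rfl | hn1
  · rw [Nat.cast_one]
    exact one_dvd _
  · have hn0 : n ≠ 0 := hn.ne'
    have hT : (1 - m) * ∑ e ∈ n.divisors,
        (∑ i ∈ Finset.range (n / e), m ^ i) ^ 2 * μ e = - Stmt14.BAF m μ n := by
      rw [Finset.mul_sum]
      have hstep : ∀ e ∈ n.divisors,
          (1 - m) * ((∑ i ∈ Finset.range (n / e), m ^ i) ^ 2 * μ e)
          = 2 * (Stmt14.gs m (n / e) * μ e) - Stmt14.gs m (2 * (n / e)) * μ e := by
        intro e _
        calc (1 - m) * ((∑ i ∈ Finset.range (n / e), m ^ i) ^ 2 * μ e)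
            = ((1 - m) * Stmt14.gs m (n / e) ^ 2) * μ e := by rw [Stmt14.gs]; ring
          _ = (2 * Stmt14.gs m (n / e) - Stmt14.gs m (2 * (n / e))) * μ e := by
              rw [Stmt14.key_pointwise]
          _ = _ := by ring
      rw [Finset.sum_congr rfl hstep, Finset.sum_sub_distrib]
      have hz : ∑ e ∈ n.divisors, 2 * (Stmt14.gs m (n / e) * μ e) = 0 := by
        rw [← Finset.mul_sum]
        have h0 : ∑ e ∈ n.divisors, Stmt14.gs m (n / e) * μ e = 0 := by
          rw [← hrec n (by omega)]
          rfl
        rw [h0, mul_zero]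
      rw [hz, Stmt14.B_apply]
      ring
    rw [hT, dvd_neg]
    exact Stmt14.n_dvd_B m μ h1 hrec hn0
end

section
/- Let m be an integer. If i, j divide n, then ∑_{e ∣ n/lcm(i,j)} [n/(e·i)]_{−1} · [n/(e·j)]_{−1} · μ_{−1}(e) equals 1 if both n/i and n/j are odd and lcm(i,j) = n, and equals 0 otherwise. Here [k]_{−1} = 1 if k is odd and 0 if k is even, and μ_{−1} is defined by μ_{−1}(1) = 1 and ∑_{d ∣ n} [n/d]_{−1}·μ_{−1}(d) = 0 for n > 1. -/
open scoped Classical in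
theorem stmt_17 (μ : ℕ → ℤ) (h1 : μ 1 = 1)
    (hrec : ∀ n : ℕ, 1 < n →
      ∑ d ∈ n.divisors, (∑ i ∈ Finset.range (n / d), (-1 : ℤ) ^ i) * μ d = 0)
    (n i j : ℕ) (hn : 0 < n) (hi : i ∣ n) (hj : j ∣ n) :
    ∑ e ∈ (n / Nat.lcm i j).divisors,
        (∑ k ∈ Finset.range (n / (e * i)), (-1 : ℤ) ^ k)
          * (∑ k ∈ Finset.range (n / (e * j)), (-1 : ℤ) ^ k) * μ e
      = if Odd (n / i) ∧ Odd (n / j) ∧ Nat.lcm i j = n then 1 else 0 := by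
  have hipos : 0 < i := Nat.pos_of_dvd_of_pos hi hn
  have hjpos : 0 < j := Nat.pos_of_dvd_of_pos hj hn
  set L := Nat.lcm i j with hL
  have hLdvd : L ∣ n := Nat.lcm_dvd hi hj
  have hLpos : 0 < L := Nat.pos_of_dvd_of_pos hLdvd hn
  set M := n / L with hM
  have hMpos : 0 < M := Nat.div_pos (Nat.le_of_dvd hn hLdvd) hLpos
  have hML : M * L = n := Nat.div_mul_cancel hLdvd
  have hiL : i ∣ L := Nat.dvd_lcm_left i j
  have hjL : j ∣ L := Nat.dvd_lcm_right i j
  have key : ∀ e ∈ M.divisors, ∀ d : ℕ, d ∣ L → n / (e * d) = (M / e) * (L / d) := by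
    intro e he d hd
    have heM : e ∣ M := (Nat.mem_divisors.mp he).1
    rw [Nat.div_mul_div_comm heM hd, hML]
  have parity : ∀ k : ℕ, (∑ r ∈ Finset.range k, (-1:ℤ)^r) = if Odd k then 1 else 0 := by
    intro k
    rw [neg_one_geom_sum]
    by_cases h : Even k <;> simp [h, ← Nat.not_even_iff_odd]
  by_cases hodd : Odd (L / i) ∧ Odd (L / j)
  · have hsum : ∑ e ∈ M.divisors,
        (∑ k ∈ Finset.range (n / (e * i)), (-1 : ℤ) ^ k)
          * (∑ k ∈ Finset.range (n / (e * j)), (-1 : ℤ) ^ k) * μ e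
        = ∑ e ∈ M.divisors, (∑ k ∈ Finset.range (M / e), (-1:ℤ)^k) * μ e := by
      apply Finset.sum_congr rfl
      intro e he
      rw [parity, parity, parity, key e he i hiL, key e he j hjL]
      simp only [Nat.odd_mul]
      by_cases h : Odd (M / e) <;> simp [h, hodd.1, hodd.2]
    rw [hsum]
    rcases eq_or_lt_of_le (Nat.one_le_iff_ne_zero.mpr hMpos.ne') with hM1 | hM1
    · have hLn : L = n := by
        have := hML
        rw [← hM1, one_mul] at this
        exact this
      have : Odd (n / i) ∧ Odd (n / j) ∧ L = n := by
        refine ⟨?_, ?_, hLn⟩ <;> rw [← hLn] <;> [exact hodd.1; exact hodd.2]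
      rw [if_pos this, ← hM1]
      simp [Nat.divisors_one, h1]
    · rw [hrec M hM1, if_neg]
      rintro ⟨-, -, hLn⟩
      rw [hLn, Nat.div_self hn] at hM
      omega
  · have hzero : ∀ e ∈ M.divisors,
        (∑ k ∈ Finset.range (n / (e * i)), (-1 : ℤ) ^ k)
          * (∑ k ∈ Finset.range (n / (e * j)), (-1 : ℤ) ^ k) * μ e = 0 := by
      intro e he
      rw [parity, parity, key e he i hiL, key e he j hjL]
      simp only [Nat.odd_mul]
      by_cases h1 : Odd (L / i)
      · have h2 : ¬ Odd (L / j) := fun h2 => hodd ⟨h1, h2⟩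
        simp [h2]
      · simp [h1]
    rw [Finset.sum_eq_zero hzero, if_neg]
    rintro ⟨hni, hnj, hLn⟩
    exact hodd ⟨by rwa [hLn], by rwa [hLn]⟩
end

section
/- Let m ≠ 1 be an integer, r ≥ 1, and for each n ≥ 1 define R_n ∈ ℚ by the recursion ∑_{d ∣ n} d·[n/d]_m·R_d = ∑_{e ∣ n·r} e·[n·r/e]_m · x_e, solved formally in ℚ ⊗ ℤ[x_e : e ≥ 1] (treating x_e as commuting indeterminates and with no Ψ-operations, i.e., Ψ = id). Then n·R_n = ∑_{e ∣ n·r} e·(∑_{d ∣ gcd(n, n·r/e)} μ_m(d)·[n·r/(d·e)]_m)·x_e, and in particular for each e ∣ n·r the integer e·∑_{d ∣ gcd(n, nr/e)} μ_m(d)·[nr/(de)]_m is divisible by n when m = 0, where it equals e if lcm(r, e) = n·r and 0 otherwise. -/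
theorem stmt_19 (m : ℤ) (hm : m ≠ 1) (r : ℕ) (hr : 1 ≤ r)
    (μ : ℕ → ℤ) (hμ1 : μ 1 = 1)
    (hμ : ∀ n : ℕ, 1 < n →
      ∑ d ∈ n.divisors, (∑ i ∈ Finset.range (n / d), m ^ i) * μ d = 0)
    (Rn : ℕ → MvPolynomial ℕ ℚ)
    (hR : ∀ n : ℕ, 1 ≤ n →
      ∑ d ∈ n.divisors,
          MvPolynomial.C ((d : ℚ) * ∑ i ∈ Finset.range (n / d), (m : ℚ) ^ i) * Rn d
        = ∑ e ∈ (n * r).divisors,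
            MvPolynomial.C ((e : ℚ) * ∑ i ∈ Finset.range (n * r / e), (m : ℚ) ^ i)
              * MvPolynomial.X e)
    (n : ℕ) (hn : 1 ≤ n) :
    (MvPolynomial.C (n : ℚ) * Rn n
      = ∑ e ∈ (n * r).divisors,
          MvPolynomial.C ((e : ℚ) * ∑ d ∈ (Nat.gcd n (n * r / e)).divisors,
              (μ d : ℚ) * ∑ i ∈ Finset.range (n * r / (d * e)), (m : ℚ) ^ i)
            * MvPolynomial.X e) ∧
    (m = 0 → ∀ e ∈ (n * r).divisors,
      ((n : ℤ) ∣ (e : ℤ) * ∑ d ∈ (Nat.gcd n (n * r / e)).divisors,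
          μ d * ∑ i ∈ Finset.range (n * r / (d * e)), m ^ i) ∧
      (e : ℤ) * ∑ d ∈ (Nat.gcd n (n * r / e)).divisors,
          μ d * ∑ i ∈ Finset.range (n * r / (d * e)), m ^ i
        = if Nat.lcm r e = n * r then (e : ℤ) else 0) := by
  have hn0 : n ≠ 0 := by omega
  have hr0 : r ≠ 0 := by omega
  have hnr0 : n * r ≠ 0 := Nat.mul_ne_zero hn0 hr0
  have hdivne : ∀ {N d : ℕ}, N ≠ 0 → d ∣ N → N / d ≠ 0 := by
    intro N d hN hd
    have hd0 : 0 < d := Nat.pos_of_dvd_of_pos hd (Nat.pos_of_ne_zero hN)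
    exact (Nat.div_pos (Nat.le_of_dvd (Nat.pos_of_ne_zero hN) hd) hd0).ne'
  -- delta lemma (ℤ)
  have hδ : ∀ k : ℕ, k ≠ 0 →
      (∑ d ∈ k.divisors, μ d * ∑ i ∈ Finset.range (k / d), m ^ i)
        = if k = 1 then 1 else 0 := by
    intro k hk
    rcases eq_or_ne k 1 with h1 | h1
    · subst h1; simp [hμ1]
    · rw [if_neg h1, ← hμ k (by omega)]
      exact Finset.sum_congr rfl fun d _ => mul_comm _ _
  -- delta lemma (ℚ)
  have hδQ : ∀ k : ℕ, k ≠ 0 →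
      (∑ d ∈ k.divisors, (μ d : ℚ) * ∑ i ∈ Finset.range (k / d), (m : ℚ) ^ i)
        = if k = 1 then 1 else 0 := by
    intro k hk
    have h := hδ k hk
    have h2 : ((∑ d ∈ k.divisors, μ d * ∑ i ∈ Finset.range (k / d), m ^ i : ℤ) : ℚ)
        = ((if k = 1 then (1:ℤ) else 0 : ℤ) : ℚ) := by rw [h]
    push_cast at h2
    split at h2 <;> split <;> simp_all
  -- Möbius inversion step
  have inv : MvPolynomial.C (n : ℚ) * Rn n
      = ∑ d ∈ n.divisors, MvPolynomial.C ((μ d : ℚ)) *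
          ∑ c ∈ (n / d).divisors,
            MvPolynomial.C ((c : ℚ) * ∑ i ∈ Finset.range (n / d / c), (m : ℚ) ^ i) * Rn c := by
    symm
    calc ∑ d ∈ n.divisors, MvPolynomial.C ((μ d : ℚ)) *
            ∑ c ∈ (n / d).divisors,
              MvPolynomial.C ((c : ℚ) * ∑ i ∈ Finset.range (n / d / c), (m : ℚ) ^ i) * Rn c
        = ∑ d ∈ n.divisors, ∑ c ∈ (n / d).divisors, MvPolynomial.C ((μ d : ℚ)) *
              (MvPolynomial.C ((c : ℚ) * ∑ i ∈ Finset.range (n / d / c), (m : ℚ) ^ i) * Rn c) := by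
          simp only [Finset.mul_sum]
      _ = ∑ c ∈ n.divisors, ∑ d ∈ (n / c).divisors, MvPolynomial.C ((μ d : ℚ)) *
              (MvPolynomial.C ((c : ℚ) * ∑ i ∈ Finset.range (n / d / c), (m : ℚ) ^ i) * Rn c) := by
          refine Finset.sum_comm' ?_
          intro d c
          simp only [Nat.mem_divisors]
          constructor
          · rintro ⟨⟨hd, -⟩, hc, -⟩
            have hdc : d * c ∣ n := (Nat.dvd_div_iff_mul_dvd hd).1 hc
            have hcn : c ∣ n := dvd_trans (dvd_mul_left c d) hdc
            exact ⟨⟨(Nat.dvd_div_iff_mul_dvd hcn).2 (by rwa [mul_comm] at hdc),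
              hdivne hn0 hcn⟩, hcn, hn0⟩
          · rintro ⟨⟨hd, -⟩, hc, -⟩
            have hcd : c * d ∣ n := (Nat.dvd_div_iff_mul_dvd hc).1 hd
            have hdn : d ∣ n := dvd_trans (dvd_mul_left d c) hcd
            exact ⟨⟨hdn, hn0⟩, (Nat.dvd_div_iff_mul_dvd hdn).2 (by rwa [mul_comm] at hcd),
              hdivne hn0 hdn⟩
      _ = ∑ c ∈ n.divisors,
            MvPolynomial.C ((if n / c = 1 then 1 else 0 : ℚ)) *
              (MvPolynomial.C (c : ℚ) * Rn c) := by
          refine Finset.sum_congr rfl fun c hc => ?_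
          have hcn : c ∣ n := (Nat.mem_divisors.1 hc).1
          calc ∑ d ∈ (n / c).divisors, MvPolynomial.C ((μ d : ℚ)) *
                  (MvPolynomial.C ((c : ℚ) * ∑ i ∈ Finset.range (n / d / c), (m : ℚ) ^ i) * Rn c)
              = ∑ d ∈ (n / c).divisors,
                  MvPolynomial.C ((μ d : ℚ) * ∑ i ∈ Finset.range (n / c / d), (m : ℚ) ^ i) *
                    (MvPolynomial.C (c : ℚ) * Rn c) := by
                refine Finset.sum_congr rfl fun d hd => ?_
                rw [show n / d / c = n / c / d by
                  rw [Nat.div_div_eq_div_mul, Nat.div_div_eq_div_mul, Nat.mul_comm]]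
                rw [map_mul, map_mul]
                ring
            _ = MvPolynomial.C (∑ d ∈ (n / c).divisors,
                  (μ d : ℚ) * ∑ i ∈ Finset.range (n / c / d), (m : ℚ) ^ i) *
                    (MvPolynomial.C (c : ℚ) * Rn c) := by
                rw [← Finset.sum_mul, ← map_sum]
            _ = _ := by rw [hδQ (n / c) (hdivne hn0 hcn)]
      _ = ∑ c ∈ n.divisors, if c = n then MvPolynomial.C (c : ℚ) * Rn c else 0 := by
          refine Finset.sum_congr rfl fun c hc => ?_
          have hcn : c ∣ n := (Nat.mem_divisors.1 hc).1
          have hiff : (n / c = 1) ↔ (c = n) := by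
            constructor
            · intro h
              have h2 := Nat.div_mul_cancel hcn
              rw [h, one_mul] at h2
              exact h2
            · rintro rfl
              exact Nat.div_self (Nat.pos_of_ne_zero hn0)
          simp only [hiff]
          split_ifs <;> simp
      _ = MvPolynomial.C (n : ℚ) * Rn n := by
          rw [Finset.sum_ite_eq' n.divisors n (fun c => MvPolynomial.C (c : ℚ) * Rn c),
            if_pos (Nat.mem_divisors_self n hn0)]
  -- Part 1
  have part1 : MvPolynomial.C (n : ℚ) * Rn n
      = ∑ e ∈ (n * r).divisors,
          MvPolynomial.C ((e : ℚ) * ∑ d ∈ (Nat.gcd n (n * r / e)).divisors,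
              (μ d : ℚ) * ∑ i ∈ Finset.range (n * r / (d * e)), (m : ℚ) ^ i)
            * MvPolynomial.X e := by
    calc MvPolynomial.C (n : ℚ) * Rn n
        = ∑ d ∈ n.divisors, MvPolynomial.C ((μ d : ℚ)) *
            ∑ c ∈ (n / d).divisors,
              MvPolynomial.C ((c : ℚ) * ∑ i ∈ Finset.range (n / d / c), (m : ℚ) ^ i) * Rn c :=
          inv
      _ = ∑ d ∈ n.divisors, ∑ e ∈ (n * r / d).divisors, MvPolynomial.C ((μ d : ℚ)) *
            (MvPolynomial.C ((e : ℚ) * ∑ i ∈ Finset.range (n * r / (d * e)), (m : ℚ) ^ i)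
              * MvPolynomial.X e) := by
          refine Finset.sum_congr rfl fun d hd => ?_
          have hdn : d ∣ n := (Nat.mem_divisors.1 hd).1
          have hd0 : 0 < d := Nat.pos_of_dvd_of_pos hdn (Nat.pos_of_ne_zero hn0)
          have hmul : n / d * r = n * r / d := by
            obtain ⟨t, rfl⟩ := hdn
            rw [Nat.mul_div_cancel_left t hd0, Nat.mul_assoc, Nat.mul_div_cancel_left _ hd0]
          rw [hR (n / d) (Nat.one_le_iff_ne_zero.2 (hdivne hn0 hdn)), hmul, Finset.mul_sum]
          refine Finset.sum_congr rfl fun e he => ?_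
          rw [Nat.div_div_eq_div_mul]
      _ = ∑ e ∈ (n * r).divisors, ∑ d ∈ (Nat.gcd n (n * r / e)).divisors,
            MvPolynomial.C ((μ d : ℚ)) *
            (MvPolynomial.C ((e : ℚ) * ∑ i ∈ Finset.range (n * r / (d * e)), (m : ℚ) ^ i)
              * MvPolynomial.X e) := by
          refine Finset.sum_comm' ?_
          intro d e
          simp only [Nat.mem_divisors, Nat.dvd_gcd_iff]
          constructor
          · rintro ⟨⟨hdn, -⟩, hed, -⟩
            have hdnr : d ∣ n * r := hdn.mul_right r
            have hde : d * e ∣ n * r := (Nat.dvd_div_iff_mul_dvd hdnr).1 hed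
            have he : e ∣ n * r := dvd_trans (dvd_mul_left e d) hde
            exact ⟨⟨⟨hdn, (Nat.dvd_div_iff_mul_dvd he).2 (by rwa [mul_comm] at hde)⟩,
              Nat.gcd_ne_zero_left hn0⟩, he, hnr0⟩
          · rintro ⟨⟨⟨hdn, hdq⟩, -⟩, he, -⟩
            have hed2 : e * d ∣ n * r := (Nat.dvd_div_iff_mul_dvd he).1 hdq
            have hdnr : d ∣ n * r := hdn.mul_right r
            exact ⟨⟨hdn, hn0⟩,
              (Nat.dvd_div_iff_mul_dvd hdnr).2 (by rwa [mul_comm] at hed2),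
              hdivne hnr0 hdnr⟩
      _ = _ := by
          refine Finset.sum_congr rfl fun e he => ?_
          calc ∑ d ∈ (Nat.gcd n (n * r / e)).divisors, MvPolynomial.C ((μ d : ℚ)) *
                (MvPolynomial.C ((e : ℚ) * ∑ i ∈ Finset.range (n * r / (d * e)), (m : ℚ) ^ i)
                  * MvPolynomial.X e)
              = ∑ d ∈ (Nat.gcd n (n * r / e)).divisors,
                  MvPolynomial.C ((e : ℚ) *
                    ((μ d : ℚ) * ∑ i ∈ Finset.range (n * r / (d * e)), (m : ℚ) ^ i)) *
                    MvPolynomial.X e := by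
                refine Finset.sum_congr rfl fun d hd => ?_
                rw [map_mul, map_mul, map_mul]
                ring
            _ = _ := by
                rw [← Finset.sum_mul, ← map_sum, ← Finset.mul_sum]
  refine ⟨part1, ?_⟩
  -- Part 2
  intro hm0 e he
  subst hm0
  obtain ⟨henr, -⟩ := Nat.mem_divisors.1 he
  have hgeo : ∀ k : ℕ, k ≠ 0 → (∑ i ∈ Finset.range k, (0:ℤ) ^ i) = 1 := by
    intro k hk
    have h1 : ∀ i ∈ Finset.range k, (0:ℤ) ^ i = if i = 0 then 1 else 0 :=
      fun i _ => zero_pow_eq i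
    rw [Finset.sum_congr rfl h1, Finset.sum_ite_eq',
      if_pos (Finset.mem_range.2 (Nat.pos_of_ne_zero hk))]
  set g := Nat.gcd n (n * r / e) with hgdef
  have hg0 : g ≠ 0 := Nat.gcd_ne_zero_left hn0
  have hge : g * e = n * Nat.gcd e r := by
    have h1 : n * r / e * e = n * r := Nat.div_mul_cancel henr
    calc g * e = Nat.gcd (n * e) (n * r / e * e) := (Nat.gcd_mul_right n e (n * r / e)).symm
      _ = Nat.gcd (n * e) (n * r) := by rw [h1]
      _ = n * Nat.gcd e r := Nat.gcd_mul_left n e r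
  have hlcm : g * Nat.lcm r e = n * r := by
    have hgr0 : Nat.gcd r e ≠ 0 := fun h => hr0 (Nat.eq_zero_of_gcd_eq_zero_left h)
    apply Nat.eq_of_mul_eq_mul_right (Nat.pos_of_ne_zero hgr0)
    calc g * Nat.lcm r e * Nat.gcd r e = g * (Nat.gcd r e * Nat.lcm r e) := by ring
      _ = g * (r * e) := by rw [Nat.gcd_mul_lcm]
      _ = g * e * r := by ring
      _ = n * Nat.gcd e r * r := by rw [hge]
      _ = n * r * Nat.gcd r e := by rw [Nat.gcd_comm e r]; ring
  have hiff : g = 1 ↔ Nat.lcm r e = n * r := by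
    constructor
    · intro h
      rw [h, one_mul] at hlcm
      exact hlcm
    · intro h
      rw [h] at hlcm
      exact Nat.eq_of_mul_eq_mul_right (Nat.pos_of_ne_zero hnr0)
        (by rw [hlcm, one_mul])
  have hval : (∑ d ∈ g.divisors, μ d * ∑ i ∈ Finset.range (n * r / (d * e)), (0:ℤ) ^ i)
      = if g = 1 then 1 else 0 := by
    rw [← hδ g hg0]
    refine Finset.sum_congr rfl fun d hd => ?_
    have hdg : d ∣ g := (Nat.mem_divisors.1 hd).1
    have hdq : d ∣ n * r / e := dvd_trans hdg (Nat.gcd_dvd_right _ _)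
    have hde : d * e ∣ n * r := by
      have := (Nat.dvd_div_iff_mul_dvd henr).1 hdq
      rwa [mul_comm] at this
    rw [hgeo _ (hdivne hnr0 hde), hgeo _ (hdivne hg0 hdg)]
  have hfin : (e : ℤ) * ∑ d ∈ g.divisors, μ d * ∑ i ∈ Finset.range (n * r / (d * e)), (0:ℤ) ^ i
      = if Nat.lcm r e = n * r then (e : ℤ) else 0 := by
    rw [hval]
    by_cases h : g = 1
    · rw [if_pos h, if_pos (hiff.1 h), mul_one]
    · rw [if_neg h, if_neg (fun hl => h (hiff.2 hl)), mul_zero]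
  refine ⟨?_, hfin⟩
  rw [hfin]
  by_cases hl : Nat.lcm r e = n * r
  · rw [if_pos hl]
    have h1 := hiff.2 hl
    rw [h1, one_mul] at hge
    exact Int.natCast_dvd_natCast.2 (Dvd.intro _ hge.symm)
  · rw [if_neg hl]
    exact dvd_zero _
end
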